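/- arXiv:1311.0924 — 2 statements merged into one kernel-verified Lean document; each statement's English description precedes it below -/
import Mathlib

section
/- Let b_1, …, b_n be XOS valuations. Then for every allocation (x_1, …, x_n) that is a partition of Fin m (the x_i are pairwise disjoint and their union is Fin m), it holds that ∑_i [ W^{b_{-i}}(Fin m) − W^{b_{-i}}(Fin m \ x_i) ] ≤ 2 · W^b(Fin m). -/
open Finset

/-- A valuation on `m` items: normalized at `∅`, monotone, nonnegative. -/
def IsValuation {m : ℕ} (v : Finset (Fin m) → ℝ) : Prop :=
  v ∅ = 0 ∧ (∀ S T : Finset (Fin m), S ⊆ T → v S ≤ v T) ∧ (∀ S, 0 ≤ v S)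

/-- `S` is in the demand set of valuation `v` at prices `p`. -/
def InDemand {m : ℕ} (v : Finset (Fin m) → ℝ) (p : Fin m → ℝ) (S : Finset (Fin m)) : Prop :=
  ∀ T : Finset (Fin m), v T - ∑ j ∈ T, p j ≤ v S - ∑ j ∈ S, p j

/-- Gross substitutes valuations. -/
def IsGS {m : ℕ} (v : Finset (Fin m) → ℝ) : Prop :=
  IsValuation v ∧
    ∀ p q : Fin m → ℝ, (∀ j, p j ≤ q j) →
      ∀ S : Finset (Fin m), InDemand v p S →
        ∃ T : Finset (Fin m), InDemand v q T ∧ ∀ j ∈ S, p j = q j → j ∈ T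

/-- Additive valuations. -/
def IsAdditive {m : ℕ} (v : Finset (Fin m) → ℝ) : Prop :=
  ∃ w : Fin m → ℝ, (∀ j, 0 ≤ w j) ∧ ∀ S : Finset (Fin m), v S = ∑ j ∈ S, w j

/-- XOS valuations: a max over a nonempty finite family of nonnegative additive valuations. -/
def IsXOS {m : ℕ} (v : Finset (Fin m) → ℝ) : Prop :=
  ∃ (k : ℕ) (w : Fin (k + 1) → Fin m → ℝ),
    (∀ i j, 0 ≤ w i j) ∧
    ∀ S : Finset (Fin m),
      v S = Finset.univ.sup' Finset.univ_nonempty (fun i => ∑ j ∈ S, w i j)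

def GSvals (m : ℕ) : Set (Finset (Fin m) → ℝ) := {u | IsGS u}
def XOSvals (m : ℕ) : Set (Finset (Fin m) → ℝ) := {u | IsXOS u}

/-- The welfare `W^b(S)`: the maximum of `∑ i, b i (X i)` over allocations (pairwise disjoint
tuples of subsets) contained in `S`. -/
noncomputable def W {n m : ℕ} (b : Fin n → Finset (Fin m) → ℝ) (S : Finset (Fin m)) : ℝ :=
  sSup {t : ℝ | ∃ X : Fin n → Finset (Fin m),
    (∀ i j : Fin n, i ≠ j → Disjoint (X i) (X j)) ∧ (∀ i, X i ⊆ S) ∧ t = ∑ i, b i (X i)}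

/-- The welfare `W^{b₋ᵢ}(S)` with agent `i` omitted. -/
noncomputable def Wminus {n m : ℕ} (b : Fin n → Finset (Fin m) → ℝ) (i : Fin n)
    (S : Finset (Fin m)) : ℝ :=
  sSup {t : ℝ | ∃ X : Fin n → Finset (Fin m),
    (∀ k l : Fin n, k ≠ l → Disjoint (X k) (X l)) ∧ (∀ k, X k ⊆ S) ∧
    t = ∑ k ∈ Finset.univ.erase i, b k (X k)}

/-- The welfare `W^b(x)` for a multiplicity vector `x : Fin m → ℕ`: maximum of `∑ i, b i (X i)`
over tuples of sets in which each item `j` is used at most `x j` times. -/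
noncomputable def Wmult {n m : ℕ} (b : Fin n → Finset (Fin m) → ℝ) (x : Fin m → ℕ) : ℝ :=
  sSup {t : ℝ | ∃ X : Fin n → Finset (Fin m),
    (∀ j : Fin m, (Finset.univ.filter fun i => j ∈ X i).card ≤ x j) ∧ t = ∑ i, b i (X i)}

/-- The optimal welfare for the true valuations. -/
noncomputable def OPT {n m : ℕ} (v : Fin n → Finset (Fin m) → ℝ) : ℝ := W v Finset.univ

/-- A mechanism: allocation and payment maps on bid profiles. -/
structure Mechanism (n m : ℕ) where
  alloc : (Fin n → Finset (Fin m) → ℝ) → Fin n → Finset (Fin m)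
  pay : (Fin n → Finset (Fin m) → ℝ) → Fin n → ℝ

/-- A bid profile lies in the bid space `B`. -/
def InBidSpace {n m : ℕ} (B : Set (Finset (Fin m) → ℝ))
    (b : Fin n → Finset (Fin m) → ℝ) : Prop :=
  ∀ i, b i ∈ B

/-- On bid profiles from `B`, the allocation is pairwise disjoint. -/
def AllocDisjoint {n m : ℕ} (M : Mechanism n m) (B : Set (Finset (Fin m) → ℝ)) : Prop :=
  ∀ b, InBidSpace B b → ∀ i j : Fin n, i ≠ j → Disjoint (M.alloc b i) (M.alloc b j)

/-- On bid profiles from `B`, payments are nonnegative. -/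
def PayNonneg {n m : ℕ} (M : Mechanism n m) (B : Set (Finset (Fin m) → ℝ)) : Prop :=
  ∀ b, InBidSpace B b → ∀ i, 0 ≤ M.pay b i

/-- The utility of agent `i` with true valuation `v` under bid profile `b`. -/
noncomputable def util {n m : ℕ} (M : Mechanism n m) (v : Finset (Fin m) → ℝ) (i : Fin n)
    (b : Fin n → Finset (Fin m) → ℝ) : ℝ :=
  v (M.alloc b i) - M.pay b i

/-- Declared welfare maximizer. -/
def IsDWM {n m : ℕ} (M : Mechanism n m) (B : Set (Finset (Fin m) → ℝ)) : Prop :=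
  (∀ b, InBidSpace B b → ∑ i, b i (M.alloc b i) = W b Finset.univ) ∧
  (∀ b, InBidSpace B b → ∀ i, M.pay b i ≤ b i (M.alloc b i)) ∧
  (∀ b, InBidSpace B b → ∀ i : Fin n, ∃ b' : Fin n → Finset (Fin m) → ℝ,
    InBidSpace B b' ∧ b' i = b i ∧ M.alloc b' i = M.alloc b i ∧
    M.pay b' i = b i (M.alloc b i))

/-- English Walrasian mechanism: welfare-maximizing allocation w.r.t. the bids, with
payments given by the minimum Walrasian prices `W^b(𝟙 + e_j) − W^b(𝟙)`. -/
def IsEnglish {n m : ℕ} (M : Mechanism n m) (B : Set (Finset (Fin m) → ℝ)) : Prop :=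
  (∀ b, InBidSpace B b → ∑ i, b i (M.alloc b i) = W b Finset.univ) ∧
  (∀ b, InBidSpace B b → ∀ i, M.pay b i =
    ∑ j ∈ M.alloc b i,
      (Wmult b (fun k => if k = j then 2 else 1) - Wmult b (fun _ => 1)))

/-- VCG mechanism: welfare-maximizing allocation w.r.t. the bids, with externality payments. -/
def IsVCG {n m : ℕ} (M : Mechanism n m) (B : Set (Finset (Fin m) → ℝ)) : Prop :=
  (∀ b, InBidSpace B b → ∑ i, b i (M.alloc b i) = W b Finset.univ) ∧
  (∀ b, InBidSpace B b → ∀ i, M.pay b i =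
    Wminus b i Finset.univ - Wminus b i (Finset.univ \ M.alloc b i))

/-- Bid `bi` of agent `i` with true valuation `v` has exposure factor `γ`. -/
def HasExposureFactor {n m : ℕ} (M : Mechanism n m) (B : Set (Finset (Fin m) → ℝ))
    (v : Finset (Fin m) → ℝ) (i : Fin n) (bi : Finset (Fin m) → ℝ) (γ : ℝ) : Prop :=
  ∀ b : Fin n → Finset (Fin m) → ℝ, InBidSpace B b → b i = bi →
    M.pay b i ≤ (1 + γ) * v (M.alloc b i)

/-- `b` is a pure Nash equilibrium for true valuations `v`. -/
noncomputable def IsNash {n m : ℕ} (M : Mechanism n m) (B : Set (Finset (Fin m) → ℝ))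
    (v b : Fin n → Finset (Fin m) → ℝ) : Prop :=
  InBidSpace B b ∧
  ∀ i : Fin n, ∀ bi' ∈ B, util M (v i) i (Function.update b i bi') ≤ util M (v i) i b

/-- A finitely supported probability distribution. -/
structure FinDist (α : Type*) where
  supp : Finset α
  μ : α → ℝ
  nonneg : ∀ a, 0 ≤ μ a
  sum_one : ∑ a ∈ supp, μ a = 1

/-- Expectation of `f` under a finitely supported distribution. -/
noncomputable def FinDist.exp {α : Type*} (D : FinDist α) (f : α → ℝ) : ℝ :=
  ∑ a ∈ D.supp, D.μ a * f a

/-- Bayes-Nash equilibrium: strategies map types in `V` to bids in `B`, and no unilateral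
deviation (depending only on the agent's own type) improves expected utility. -/
noncomputable def IsBNE {n m : ℕ} (M : Mechanism n m) (V B : Set (Finset (Fin m) → ℝ))
    (D : FinDist (Fin n → Finset (Fin m) → ℝ))
    (s : Fin n → (Finset (Fin m) → ℝ) → Finset (Fin m) → ℝ) : Prop :=
  (∀ i : Fin n, ∀ vi ∈ V, s i vi ∈ B) ∧
  ∀ i : Fin n, ∀ s' : (Finset (Fin m) → ℝ) → Finset (Fin m) → ℝ, (∀ vi ∈ V, s' vi ∈ B) →
    D.exp (fun v => util M (v i) i (Function.update (fun k => s k (v k)) i (s' (v i)))) ≤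
    D.exp (fun v => util M (v i) i (fun k => s k (v k)))

/-- Strategy `si` of agent `i` has exposure factor `γ` under distribution `D`. -/
noncomputable def BayesExposure {n m : ℕ} (M : Mechanism n m)
    (V B : Set (Finset (Fin m) → ℝ)) (D : FinDist (Fin n → Finset (Fin m) → ℝ)) (i : Fin n)
    (si : (Finset (Fin m) → ℝ) → Finset (Fin m) → ℝ) (γ : ℝ) : Prop :=
  ∀ c : (Finset (Fin m) → ℝ) → Fin n → Finset (Fin m) → ℝ,
    (∀ vi ∈ V, InBidSpace B (c vi) ∧ c vi i = si vi) →
    D.exp (fun v => M.pay (c (v i)) i) ≤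
      (1 + γ) * D.exp (fun v => (v i) (M.alloc (c (v i)) i))

/-- for XOS bids and any partition (x_i) of all items,
∑ᵢ [W^{b₋ᵢ}(𝟙) − W^{b₋ᵢ}(𝟙 − xᵢ)] ≤ 2·W^b(𝟙). -/
theorem stmt11 {n m : ℕ} (b : Fin n → Finset (Fin m) → ℝ) (hb : ∀ i, IsXOS (b i))
    (x : Fin n → Finset (Fin m))
    (hdisj : ∀ i j : Fin n, i ≠ j → Disjoint (x i) (x j))
    (hcover : Finset.univ.biUnion x = (Finset.univ : Finset (Fin m))) :
    ∑ i, (Wminus b i Finset.univ - Wminus b i (Finset.univ \ x i)) ≤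
      2 * W b Finset.univ := by
  classical
  -- basic facts from XOS
  have hb0 : ∀ k, b k ∅ = 0 := by
    intro k
    obtain ⟨K, w, hw0, hwS⟩ := hb k
    rw [hwS]
    simp
  -- the welfare set for W b univ
  set SW : Set ℝ := {t : ℝ | ∃ X : Fin n → Finset (Fin m),
      (∀ i j : Fin n, i ≠ j → Disjoint (X i) (X j)) ∧ (∀ i, X i ⊆ Finset.univ) ∧
      t = ∑ i, b i (X i)} with hSWdef
  have hWdef : W b Finset.univ = sSup SW := rfl
  have hSWfin : SW.Finite := by
    apply (Set.finite_range (fun X : Fin n → Finset (Fin m) => ∑ i, b i (X i))).subset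
    rintro t ⟨X, -, -, rfl⟩
    exact ⟨X, rfl⟩
  have hSWne : SW.Nonempty := by
    refine ⟨0, fun _ => ∅, fun _ _ _ => Finset.disjoint_empty_left _, fun _ => Finset.empty_subset _, ?_⟩
    simp [hb0]
  have hSWbdd : BddAbove SW := hSWfin.bddAbove
  obtain ⟨Y, hYdisj, hYsub, hYval⟩ := hSWne.csSup_mem hSWfin
  -- supporting additive vectors at Y k
  have hsupp : ∀ k : Fin n, ∃ a : Fin m → ℝ, (∀ j, 0 ≤ a j) ∧
      b k (Y k) = ∑ j ∈ Y k, a j ∧ ∀ T : Finset (Fin m), ∑ j ∈ T, a j ≤ b k T := by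
    intro k
    obtain ⟨K, w, hw0, hwS⟩ := hb k
    obtain ⟨i0, -, hi0⟩ := Finset.exists_mem_eq_sup' (Finset.univ_nonempty)
      (fun i => ∑ j ∈ Y k, w i j)
    refine ⟨w i0, hw0 i0, by rw [hwS]; exact hi0, fun T => ?_⟩
    rw [hwS]
    exact Finset.le_sup' (fun i => ∑ j ∈ T, w i j) (Finset.mem_univ i0)
  choose a ha0 haY haT using hsupp
  -- the key per-agent bound
  have key : ∀ i : Fin n,
      Wminus b i Finset.univ - Wminus b i (Finset.univ \ x i) ≤
      b i (Y i) + ∑ k ∈ Finset.univ.erase i, ∑ j ∈ Y k ∩ x i, a k j := by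
    intro i
    -- upper bound on Wminus b i univ
    have hup : Wminus b i Finset.univ ≤ sSup SW := by
      apply csSup_le
      · exact ⟨∑ k ∈ Finset.univ.erase i, b k ((fun _ => (∅ : Finset (Fin m))) k),
          fun _ => ∅, fun _ _ _ => Finset.disjoint_empty_left _,
          fun _ => Finset.empty_subset _, rfl⟩
      rintro t ⟨X, hXd, hXs, rfl⟩
      have hmem : (∑ k ∈ Finset.univ.erase i, b k (X k)) ∈ SW := by
        refine ⟨Function.update X i ∅, ?_, fun _ => Finset.subset_univ _, ?_⟩
        · intro k l hkl
          rcases eq_or_ne k i with rfl | hk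
          · simp [Function.update_self]
          rcases eq_or_ne l i with rfl | hl
          · simp [Function.update_self]
          rw [Function.update_of_ne hk, Function.update_of_ne hl]
          exact hXd k l hkl
        · rw [← Finset.add_sum_erase _ _ (Finset.mem_univ i)]
          rw [Function.update_self, hb0, zero_add]
          refine Finset.sum_congr rfl fun k hk => ?_
          rw [Function.update_of_ne (Finset.ne_of_mem_erase hk)]
      exact le_csSup hSWbdd hmem
    -- lower bound on Wminus b i (univ \ x i)
    have hdown : (∑ k ∈ Finset.univ.erase i, b k (Y k \ x i)) ≤
        Wminus b i (Finset.univ \ x i) := by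
      set SM : Set ℝ := {t : ℝ | ∃ X : Fin n → Finset (Fin m),
        (∀ k l : Fin n, k ≠ l → Disjoint (X k) (X l)) ∧
        (∀ k, X k ⊆ Finset.univ \ x i) ∧
        t = ∑ k ∈ Finset.univ.erase i, b k (X k)} with hSMdef
      have hSMfin : SM.Finite := by
        apply (Set.finite_range (fun X : Fin n → Finset (Fin m) =>
          ∑ k ∈ Finset.univ.erase i, b k (X k))).subset
        rintro t ⟨X, -, -, rfl⟩
        exact ⟨X, rfl⟩
      have hmem : (∑ k ∈ Finset.univ.erase i, b k (Y k \ x i)) ∈ SM := by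
        refine ⟨fun k => Y k \ x i, fun k l hkl =>
          Finset.disjoint_of_subset_left (Finset.sdiff_subset)
            (Finset.disjoint_of_subset_right (Finset.sdiff_subset) (hYdisj k l hkl)),
          fun k => Finset.sdiff_subset_sdiff (Finset.subset_univ _) (le_refl _), rfl⟩
      exact le_csSup hSMfin.bddAbove hmem
    -- per-k marginal bound
    have hmarg : ∀ k : Fin n, b k (Y k) - b k (Y k \ x i) ≤ ∑ j ∈ Y k ∩ x i, a k j := by
      intro k
      have h1 := haT k (Y k \ x i)
      have h2 := haY k
      have h3 : (∑ j ∈ Y k ∩ x i, a k j) + ∑ j ∈ Y k \ x i, a k j = ∑ j ∈ Y k, a k j :=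
        Finset.sum_inter_add_sum_sdiff _ _ _
      linarith
    have hsplit : sSup SW = b i (Y i) + ∑ k ∈ Finset.univ.erase i, b k (Y k) := by
      rw [hYval, ← Finset.add_sum_erase _ _ (Finset.mem_univ i)]
    have : Wminus b i Finset.univ - Wminus b i (Finset.univ \ x i) ≤
        b i (Y i) + ∑ k ∈ Finset.univ.erase i, (b k (Y k) - b k (Y k \ x i)) := by
      have := sub_le_sub hup hdown
      rw [hsplit] at this
      calc Wminus b i Finset.univ - Wminus b i (Finset.univ \ x i)
          ≤ b i (Y i) + ∑ k ∈ Finset.univ.erase i, b k (Y k) -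
            ∑ k ∈ Finset.univ.erase i, b k (Y k \ x i) := this
        _ = b i (Y i) + ∑ k ∈ Finset.univ.erase i, (b k (Y k) - b k (Y k \ x i)) := by
            rw [Finset.sum_sub_distrib]; ring
    exact this.trans (by
      gcongr with k hk
      exact hmarg k)
  -- sum everything up
  have hsum : ∑ i, (Wminus b i Finset.univ - Wminus b i (Finset.univ \ x i)) ≤
      ∑ i, (b i (Y i) + ∑ k, ∑ j ∈ Y k ∩ x i, a k j) := by
    refine Finset.sum_le_sum fun i _ => (key i).trans ?_
    exact add_le_add_right (Finset.sum_le_sum_of_subset_of_nonneg (Finset.erase_subset _ _)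
      fun k _ _ => Finset.sum_nonneg fun j _ => ha0 k j) _
  have hcol : ∀ k : Fin n, ∑ i, ∑ j ∈ Y k ∩ x i, a k j = ∑ j ∈ Y k, a k j := by
    intro k
    have hpd : ((Finset.univ : Finset (Fin n)) : Set (Fin n)).PairwiseDisjoint
        (fun i => Y k ∩ x i) := by
      intro i _ l _ hil
      exact Finset.disjoint_of_subset_left (Finset.inter_subset_right)
        (Finset.disjoint_of_subset_right (Finset.inter_subset_right) (hdisj i l hil))
    have hbu : Finset.univ.biUnion (fun i => Y k ∩ x i) = Y k := by
      ext j
      simp only [Finset.mem_biUnion, Finset.mem_inter, Finset.mem_univ, true_and]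
      constructor
      · rintro ⟨i, hj, -⟩; exact hj
      · intro hj
        have : j ∈ Finset.univ.biUnion x := by rw [hcover]; exact Finset.mem_univ j
        obtain ⟨i, -, hi⟩ := Finset.mem_biUnion.mp this
        exact ⟨i, hj, hi⟩
    rw [← Finset.sum_biUnion hpd, hbu]
  calc ∑ i, (Wminus b i Finset.univ - Wminus b i (Finset.univ \ x i))
      ≤ ∑ i, (b i (Y i) + ∑ k, ∑ j ∈ Y k ∩ x i, a k j) := hsum
    _ = ∑ i, b i (Y i) + ∑ i, ∑ k, ∑ j ∈ Y k ∩ x i, a k j := Finset.sum_add_distrib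
    _ = ∑ i, b i (Y i) + ∑ k, ∑ i, ∑ j ∈ Y k ∩ x i, a k j := by rw [Finset.sum_comm]
    _ = ∑ i, b i (Y i) + ∑ k, b k (Y k) := by
        congr 1
        exact Finset.sum_congr rfl fun k _ => by rw [hcol k, ← haY k]
    _ = 2 * W b Finset.univ := by rw [hWdef, hYval]; ring
end

section
/- Let b_1, …, b_n be gross substitutes (GS) valuations. Then for every agent i and every subset x ⊆ Fin m, the marginal welfare of x with respect to the other agents is at most the marginal welfare of x with respect to all agents: W^{b_{-i}}(Fin m) − W^{b_{-i}}(Fin m \ x) ≤ W^b(Fin m) − W^b(Fin m \ x). -/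
open Finset

namespace GSaux
variable {m : ℕ}

noncomputable def usum (v : Finset (Fin m) → ℝ) (p : Fin m → ℝ) (T : Finset (Fin m)) : ℝ :=
  v T - ∑ j ∈ T, p j
noncomputable def vstar (v : Finset (Fin m) → ℝ) (p : Fin m → ℝ) : ℝ :=
  Finset.sup' Finset.univ Finset.univ_nonempty (usum v p)
lemma usum_le_vstar (v : Finset (Fin m) → ℝ) (p : Fin m → ℝ) (T : Finset (Fin m)) :
    usum v p T ≤ vstar v p := Finset.le_sup' _ (mem_univ T)
lemma exists_vstar (v : Finset (Fin m) → ℝ) (p : Fin m → ℝ) :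
    ∃ T : Finset (Fin m), vstar v p = usum v p T := by
  obtain ⟨T, _, hT⟩ := Finset.exists_mem_eq_sup' Finset.univ_nonempty (usum v p)
  exact ⟨T, hT⟩
lemma vstar_antitone (v : Finset (Fin m) → ℝ) {p q : Fin m → ℝ} (h : ∀ e, p e ≤ q e) :
    vstar v q ≤ vstar v p := by
  obtain ⟨T, hT⟩ := exists_vstar v q
  rw [hT]
  have h1 : usum v q T ≤ usum v p T := by
    unfold usum
    have : ∑ j ∈ T, p j ≤ ∑ j ∈ T, q j := Finset.sum_le_sum (fun e _ => h e)
    linarith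
  exact h1.trans (usum_le_vstar v p T)
noncomputable def bump (p : Fin m → ℝ) (j : Fin m) (t : ℝ) : Fin m → ℝ :=
  fun e => p e + if e = j then t else 0
lemma usum_bump (v : Finset (Fin m) → ℝ) (p : Fin m → ℝ) (j : Fin m) (t : ℝ)
    (T : Finset (Fin m)) :
    usum v (bump p j t) T = usum v p T - (if j ∈ T then t else 0) := by
  unfold usum bump
  rw [Finset.sum_add_distrib]
  rw [Finset.sum_ite_eq' T j (fun _ => t)]
  ring
lemma bump_le (p : Fin m → ℝ) (j : Fin m) {t : ℝ} (ht : 0 ≤ t) :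
    ∀ e, p e ≤ bump p j t e := by
  intro e; unfold bump; by_cases h : e = j <;> simp [h, ht]
lemma bump_comm (p : Fin m → ℝ) (j k : Fin m) (s t : ℝ) :
    bump (bump p j s) k t = bump (bump p k t) j s := by
  funext e; unfold bump; ring
lemma drop {v : Finset (Fin m) → ℝ} (hv : IsGS v) (P : Fin m → ℝ)
    (A : Finset (Fin m)) (hA : InDemand v P A) (k : Fin m) :
    ∃ Z, (∀ e ∈ A, e ≠ k → e ∈ Z) ∧ k ∉ Z ∧
      ∀ X, k ∉ X → usum v P X ≤ usum v P Z := by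
  classical
  set B := vstar v P + 1 with hB
  have hle : ∀ e, P e ≤ bump P k B e := by
    apply bump_le
    have h0 : usum v P ∅ ≤ vstar v P := usum_le_vstar v P ∅
    have : usum v P ∅ = 0 := by simp [usum, hv.1.1]
    linarith
  obtain ⟨Z, hZdem, hret⟩ := hv.2 P (bump P k B) hle A hA
  have hkZ : k ∉ Z := by
    intro hkZ
    have h1 : usum v (bump P k B) ∅ ≤ usum v (bump P k B) Z := by
      simpa [usum] using hZdem ∅
    have h2 : usum v (bump P k B) Z = usum v P Z - B := by
      rw [usum_bump]; simp [hkZ]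
    have h3 : usum v (bump P k B) ∅ = 0 := by
      rw [usum_bump]; simp [usum, hv.1.1]
    have h4 : usum v P Z ≤ vstar v P := usum_le_vstar v P Z
    rw [h3, h2] at h1
    rw [hB] at h1
    linarith
  refine ⟨Z, ?_, hkZ, ?_⟩
  · intro e he hek
    apply hret e he
    unfold bump; simp [hek]
  · intro X hkX
    have h1 : usum v (bump P k B) X ≤ usum v (bump P k B) Z := hZdem X
    rw [usum_bump, usum_bump] at h1
    simp [hkX, hkZ] at h1
    exact h1
lemma aux_drop {v : Finset 
(Fin m) → ℝ} (hv : IsGS v) (p : Fin m → ℝ)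
    (j k : Fin m) (hjk : j ≠ k) (t : ℝ) (A : Finset (Fin m))
    (hdem : InDemand v (bump (bump p j t) k t) A) (hj : j ∈ A)
    (B0 : Finset (Fin m)) (hjB : j ∉ B0) (hkB : k ∉ B0) :
    ∃ Z, j ∈ Z ∧ k ∉ Z ∧ usum v p B0 + t ≤ usum v p Z := by
  obtain ⟨Z, hZsub, hkZ, hZmax⟩ := drop hv (bump (bump p j t) k t) A hdem k
  have hjZ : j ∈ Z := hZsub j hj hjk
  refine ⟨Z, hjZ, hkZ, ?_⟩
  have h1 := hZmax B0 hkB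
  rw [usum_bump, usum_bump, usum_bump, usum_bump] at h1
  simp [hjB, hkB, hjZ, hkZ] at h1
  linarith

/-- local submodularity of the indirect utility (core lemma) -/
lemma A2 {v : Finset (Fin m) → ℝ} (hv : IsGS v) (p : Fin m → ℝ) (j k : Fin m)
    (hjk : j ≠ k) {δ ε : ℝ} (hδ : 0 < δ) (hε : 0 < ε) :
    vstar v p + vstar v (bump (bump p j δ) k ε) ≤
      vstar v (bump p j δ) + vstar v (bump p k ε) := by
  classical
  obtain ⟨A, hA⟩ := exists_vstar v p
  obtain ⟨B, hB⟩ := exists_vstar v (bump (bump p j δ) k ε)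
  have hAdem : InDemand v p A := by
    intro T
    have := usum_le_vstar v p T
    rw [hA] at this
    simpa [usum] using this
  by_cases hjA : j ∈ A
  · by_cases hkA : k ∈ A
    · by_cases hjB : j ∈ B
      · -- vstar Pk ≥ vstar Pjk + δ ; vstar Pj ≥ vstar p − δ
        have h1 : vstar v (bump (bump p j δ) k ε) + δ ≤ vstar v (bump p k ε) := by
          have h := usum_le_vstar v (bump p k ε) B
          rw [usum_bump] at h
          rw [hB, usum_bump, usum_bump]
          simp only [hjB, if_true]
          linarith
        have h2 : vstar v p - δ ≤ vstar v (bump p j δ) := by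
          have h := usum_le_vstar v (bump p j δ) A
          rw [usum_bump] at h
          rw [hA]
          simp only [hjA, if_true] at h
          linarith
        linarith
      · by_cases hkB : k ∈ B
        · have h1 : vstar v (bump (bump p j δ) k ε) + ε ≤ vstar v (bump p j δ) := by
            have h := usum_le_vstar v (bump p j δ) B
            rw [usum_bump, if_neg hjB] at h
            rw [hB, usum_bump, usum_bump]
            simp only [hkB, if_true, hjB, if_false]
            linarith
          have h2 : vstar v p - ε ≤ vstar v (bump p k ε) := by
            have h := usum_le_vstar v (bump p k ε) A
            rw [usum_bump] at h
            rw [hA]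
            simp only [hkA, if_true] at h
            linarith
          linarith
        · -- HARD CASE
          set up := usum v p with hup
          have hBv : vstar v (bump (bump p j δ) k ε) = up B := by
            rw [hB, usum_bump, usum_bump]
            simp [hjB, hkB]; rfl
          have hBmax : ∀ X : Finset (Fin m), j ∉ X → k ∉ X → up X ≤ up B := by
            intro X hjX hkX
            have h := usum_le_vstar v (bump (bump p j δ) k ε) X
            rw [usum_bump, usum_bump, hBv] at h
            simpa [hjX, hkX] using h
          have hBA : up B ≤ up A := by
            have := usum_le_vstar v p B
            rw [hA] at this
            exact this
          set s1 := univ.filter (fun T : Finset (Fin m) =>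
            (j ∈ T ∧ k ∉ T) ∨ (j ∉ T ∧ k ∈ T)) with hs1
          have hs1ne : s1.Nonempty := by
            refine ⟨{j}, ?_⟩
            rw [hs1, mem_filter]
            refine ⟨mem_univ _, Or.inl ⟨mem_singleton_self j, ?_⟩⟩
            rw [mem_singleton]
            exact fun h => hjk h.symm
          set M1 := s1.sup' hs1ne up with hM1
          have hM1_le : M1 ≤ up A := by
            apply Finset.sup'_le
            intro T _
            have := usum_le_vstar v p T
            rw [hA] at this
            exact this
          have hM1_bound : ∀ T : Finset (Fin m),
              ((j ∈ T ∧ k ∉ T) ∨ (j ∉ T ∧ k ∈ T)) → up T ≤ M1 := by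
            intro T hT
            apply Finset.le_sup'
            rw [hs1, mem_filter]
            exact ⟨mem_univ _, hT⟩
          -- a generic demandedness lemma
          have hdemgen : ∀ t : ℝ, 0 ≤ t → M1 ≤ up A - t → up B ≤ up A - 2*t →
              InDemand v (bump (bump p j t) k t) A := by
            intro t ht h1 h2 T
            have e1 : usum v (bump (bump p j t) k t) T
                = up T - (if j ∈ T then t else 0) - (if k ∈ T then t else 0) := by
              rw [usum_bump, usum_bump]
            have e2 : usum v (bump (bump p j t) k t) A = up A - t - t := by
              rw [usum_bump, usum_bump]
              simp [hjA, hkA]; rfl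
            rw [show (v T - ∑ e ∈ T, bump (bump p j t) k t e)
                = usum v (bump (bump p j t) k t) T from rfl,
              show (v A - ∑ e ∈ A, bump (bump p j t) k t e)
                = usum v (bump (bump p j t) k t) A from rfl, e1, e2]
            by_cases hjT : j ∈ T <;> by_cases hkT : k ∈ T
            · have : up T ≤ up A := by
                have := usum_le_vstar v p T
                rw [hA] at this; exact this
              simp [hjT, hkT]; linarith
            · have := hM1_bound T (Or.inl ⟨hjT, hkT⟩)
              simp [hjT, hkT]; linarith
            · have := hM1_bound T (Or.inr ⟨hjT, hkT⟩)
              simp [hjT, hkT]; linarith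
            · have := hBmax T hjT hkT
              simp [hjT, hkT]; linarith
          rcases le_or_gt (2*M1) (up A + up B) with hcase | hcase
          · -- case II
            set t := (up A - up B)/2 with htdef
            have ht : 0 ≤ t := by rw [htdef]; linarith
            have hdem : InDemand v (bump (bump p j t) k t) A := by
              apply hdemgen t ht
              · rw [htdef]; linarith
              · rw [htdef]; ring_nf; linarith
            have hdem' : InDemand v (bump (bump p k t) j t) A := by
              rw [bump_comm]; exact hdem
            obtain ⟨Z, hjZ, hkZ, hZ⟩ := aux_drop hv p j k hjk t A hdem hjA B hjB hkB
            obtain ⟨Z', hkZ', hjZ', hZ'⟩ :=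
              aux_drop hv p k j (Ne.symm hjk) t A hdem' hkA B hkB hjB
            have h1 : up Z ≤ vstar v (bump p k ε) := by
              have h := usum_le_vstar v (bump p k ε) Z
              rw [usum_bump] at h
              simpa [hkZ] using h
            have h2 : up Z' ≤ vstar v (bump p j δ) := by
              have h := usum_le_vstar v (bump p j δ) Z'
              rw [usum_bump] at h
              simpa [hjZ'] using h
            have h3 : up A = up B + 2*t := by rw [htdef]; ring
            rw [hA, hBv]
            linarith
          · -- case I
            set t := up A - M1 with htdef
            have ht : 0 ≤ t := by rw [htdef]; linarith
            have hdem : InDemand v (bump (bump p j t) k t) A := by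
              apply hdemgen t ht
              · rw [htdef]; linarith
              · rw [htdef]; linarith
            obtain ⟨X₁, hX₁mem, hX₁⟩ := Finset.exists_mem_eq_sup' hs1ne up
            rw [← hM1] at hX₁
            rw [hs1, mem_filter] at hX₁mem
            rcases hX₁mem.2 with ⟨hjX, hkX⟩ | ⟨hjX, hkX⟩
            · -- j ∈ X₁, k ∉ X₁ : M1 bound on Pk side, drop j
              have hdem' : InDemand v (bump (bump p k t) j t) A := by
                rw [bump_comm]; exact hdem
              obtain ⟨Z', hkZ', hjZ', hZ'⟩ :=
                aux_drop hv p k j (Ne.symm hjk) t A hdem' hkA B hkB hjB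
              have h2 : up Z' ≤ vstar v (bump p j δ) := by
                have h := usum_le_vstar v (bump p j δ) Z'
                rw [usum_bump] at h
                simpa [hjZ'] using h
              have h1 : M1 ≤ vstar v (bump p k ε) := by
                have h := usum_le_vstar v (bump p k ε) X₁
                rw [usum_bump] at h
                rw [hX₁]
                simpa [hkX] using h
              rw [hA, hBv]
              rw [htdef] at hZ'
              linarith
            · have hdem'' := hdem
              obtain ⟨Z, hjZ, hkZ, hZ⟩ := aux_drop hv p j k hjk t A hdem hjA B hjB hkB
              have h2 : up Z ≤ vstar v (bump p k ε) := by
                have h := usum_le_vstar v (bump p k ε) Z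
                rw [usum_bump] at h
                simpa [hkZ] using h
              have h1 : M1 ≤ vstar v (bump p j δ) := by
                have h := usum_le_vstar v (bump p j δ) X₁
                rw [usum_bump] at h
                rw [hX₁]
                simpa [hjX] using h
              rw [hA, hBv]
              rw [htdef] at hZ
              linarith
    · -- k ∉ A
      have h1 : vstar v p ≤ vstar v (bump p k ε) := by
        have h := usum_le_vstar v (bump p k ε) A
        rw [usum_bump] at h
        rw [hA]
        simpa [hkA] using h
      have h2 : vstar v (bump (bump p j δ) k ε) ≤ vstar v (bump p j δ) := by
        apply vstar_antitone
        intro e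
        apply bump_le _ _ (le_of_lt hε)
      linarith
  · have h1 : vstar v p ≤ vstar v (bump p j δ) := by
      have h := usum_le_vstar v (bump p j δ) A
      rw [usum_bump] at h
      rw [hA]
      simpa [hjA] using h
    have h2 : vstar v (bump (bump p j δ) k ε) ≤ vstar v (bump p k ε) := by
      rw [bump_comm]
      apply vstar_antitone
      intro e
      apply bump_le _ _ (le_of_lt hδ)
    linarith


lemma L_one {v : Finset (Fin m) → ℝ} (hv : IsGS v) (sb : Finset (Fin m)) :
    ∀ (b : Fin m → ℝ), (∀ e, b e ≠ 0 → e ∈ sb) → (∀ e, 0 ≤ b e) →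
    ∀ (y : Fin m → ℝ) (j : Fin m), b j = 0 → ∀ (δ : ℝ), 0 < δ →
    vstar v y + vstar v (fun e => bump y j δ e + b e) ≤
      vstar v (bump y j δ) + vstar v (fun e => y e + b e) := by
  classical
  induction sb using Finset.induction_on with
  | empty =>
    intro b hsupp hnn y j hbj δ hδ
    have hb : ∀ e, b e = 0 := by
      intro e
      by_contra h
      exact absurd (hsupp e h) (notMem_empty e)
    have e1 : (fun e => bump y j δ e + b e) = bump y j δ := by
      funext e; rw [hb e]; ring
    have e2 : (fun e => y e + b e) = y := by
      funext e; rw [hb e]; ring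
    rw [e1, e2]
    linarith
  | @insert k sb' hk ih =>
    intro b hsupp hnn y j hbj δ hδ
    rcases eq_or_lt_of_le (hnn k) with hε | hε
    · -- b k = 0
      apply ih b ?_ hnn y j hbj δ hδ
      intro e he
      have := hsupp e he
      rw [mem_insert] at this
      rcases this with h | h
      · exfalso; rw [h] at he; exact he hε.symm
      · exact h
    · have hkj : k ≠ j := by
        intro h; rw [h] at hε; rw [hbj] at hε; exact lt_irrefl 0 hε
      set b' := Function.update b k 0 with hb'
      have hb'supp : ∀ e, b' e ≠ 0 → e ∈ sb' := by
        intro e he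
        have hek : e ≠ k := by
          intro h; rw [h] at he; rw [hb'] at he; simp at he
        have : b' e = b e := by rw [hb']; exact Function.update_of_ne hek 0 b
        rw [this] at he
        have := hsupp e he
        rw [mem_insert] at this
        tauto
      have hb'nn : ∀ e, 0 ≤ b' e := by
        intro e
        by_cases hek : e = k
        · rw [hb', hek]; simp
        · rw [hb', Function.update_of_ne hek 0 b]; exact hnn e
      have hb'j : b' j = 0 := by
        rw [hb', Function.update_of_ne (Ne.symm hkj) 0 b]; exact hbj
      have h1 := ih b' hb'supp hb'nn (bump y k (b k)) j hb'j δ hδ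
      have h2 := A2 hv y j k (Ne.symm hkj) hδ hε
      have E1 : (fun e => bump y k (b k) e + b' e) = (fun e => y e + b e) := by
        funext e
        by_cases hek : e = k
        · subst hek; rw [hb']; simp [bump]
        · rw [hb', Function.update_of_ne hek 0 b]; simp [bump, hek]
      have E2 : (fun e => bump (bump y k (b k)) j δ e + b' e)
          = (fun e => bump y j δ e + b e) := by
        funext e
        by_cases hek : e = k
        · subst hek; rw [hb']; simp [bump, hkj]
        · rw [hb', Function.update_of_ne hek 0 b]; simp [bump, hek]
      have E3 : bump (bump y k (b k)) j δ = bump (bump y j δ) k (b k) :=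
        bump_comm y k j (b k) δ
      rw [E1, E2] at h1
      rw [E3] at h1
      linarith

lemma L_full {v : Finset (Fin m) → ℝ} (hv : IsGS v) (sa : Finset (Fin m)) :
    ∀ (a b : Fin m → ℝ), (∀ e, a e ≠ 0 → e ∈ sa) → (∀ e, 0 ≤ a e) → (∀ e, 0 ≤ b e) →
    (∀ e, a e ≠ 0 → b e = 0) → ∀ (y : Fin m → ℝ),
    vstar v y + vstar v (fun e => y e + a e + b e) ≤
      vstar v (fun e => y e + a e) + vstar v (fun e => y e + b e) := by
  classical
  induction sa using Finset.induction_on with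
  | empty =>
    intro a b hsupp hann hbnn hdisj y
    have ha : ∀ e, a e = 0 := by
      intro e; by_contra h; exact absurd (hsupp e h) (notMem_empty e)
    have e1 : (fun e => y e + a e + b e) = (fun e => y e + b e) := by
      funext e; rw [ha e]; ring
    have e2 : (fun e => y e + a e) = y := by
      funext e; rw [ha e]; ring
    rw [e1, e2]
  | @insert j sa' hj ih =>
    intro a b hsupp hann hbnn hdisj y
    rcases eq_or_lt_of_le (hann j) with hδ | hδ
    · apply ih a b ?_ hann hbnn hdisj y
      intro e he
      have := hsupp e he
      rw [mem_insert] at this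
      rcases this with h | h
      · exfalso; rw [h] at he; exact he hδ.symm
      · exact h
    · set a' := Function.update a j 0 with ha'
      have ha'supp : ∀ e, a' e ≠ 0 → e ∈ sa' := by
        intro e he
        have hej : e ≠ j := by
          intro h; rw [h] at he; rw [ha'] at he; simp at he
        have : a' e = a e := by rw [ha']; exact Function.update_of_ne hej 0 a
        rw [this] at he
        have := hsupp e he
        rw [mem_insert] at this
        tauto
      have ha'nn : ∀ e, 0 ≤ a' e := by
        intro e
        by_cases hej : e = j
        · rw [ha', hej]; simp
        · rw [ha', Function.update_of_ne hej 0 a]; exact hann e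
      have ha'disj : ∀ e, a' e ≠ 0 → b e = 0 := by
        intro e he
        have hej : e ≠ j := by
          intro h; rw [h] at he; rw [ha'] at he; simp at he
        have : a' e = a e := by rw [ha']; exact Function.update_of_ne hej 0 a
        rw [this] at he
        exact hdisj e he
      have hbj : b j = 0 := hdisj j (by intro h; rw [h] at hδ; exact lt_irrefl 0 hδ)
      have h2 := ih a' b ha'supp ha'nn hbnn ha'disj y
      have h1 := L_one hv Finset.univ b (fun e _ => mem_univ e) hbnn
        (fun e => y e + a' e) j hbj (a j) hδ
      have F1 : bump (fun e => y e + a' e) j (a j) = (fun e => y e + a e) := by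
        funext e
        by_cases hej : e = j
        · subst hej; rw [ha']; simp [bump]
        · rw [ha']; simp [bump, hej, Function.update_of_ne hej 0 a]
      have h1' : vstar v (fun e => y e + a' e) + vstar v (fun e => y e + a e + b e) ≤
          vstar v (fun e => y e + a e) + vstar v (fun e => y e + a' e + b e) := by
        have G2 : (fun e => bump (fun e' => y e' + a' e') j (a j) e + b e)
            = (fun e => y e + a e + b e) := by
          funext e
          rw [show bump (fun e' => y e' + a' e') j (a j) e = y e + a e from
            congrFun F1 e]
        rw [G2, F1] at h1
        exact h1
      linarith


lemma vstar_submod {v : Finset (Fin m) → ℝ} (hv : IsGS v) (p q : Fin m → ℝ) :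
    vstar v (fun e => min (p e) (q e)) + vstar v (fun e => max (p e) (q e)) ≤
      vstar v p + vstar v q := by
  classical
  set a : Fin m → ℝ := fun e => p e - min (p e) (q e) with ha
  set c : Fin m → ℝ := fun e => q e - min (p e) (q e) with hc
  have h := L_full hv Finset.univ a c (fun e _ => mem_univ e)
    (fun e => by rw [ha]; simp [min_le_left])
    (fun e => by rw [hc]; simp [min_le_right])
    (fun e he => by
      have hpq : q e ≤ p e := by
        by_contra hle
        push_neg at hle
        apply he
        show p e - min (p e) (q e) = 0
        rw [min_eq_left (le_of_lt hle)]; ring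
      show q e - min (p e) (q e) = 0
      rw [min_eq_right hpq]; ring)
    (fun e => min (p e) (q e))
  have E1 : (fun e => min (p e) (q e) + a e) = p := by
    funext e; rw [ha]; ring
  have E2 : (fun e => min (p e) (q e) + c e) = q := by
    funext e; rw [hc]; ring
  have E3 : (fun e => min (p e) (q e) + a e + c e) = (fun e => max (p e) (q e)) := by
    funext e; rw [ha, hc]
    have := min_add_max (p e) (q e)
    ring_nf
    linarith
  rw [E1, E2, E3] at h
  exact h

section Auction

variable {n : ℕ}

noncomputable def bmax (b : Fin n → Finset (Fin m) → ℝ) : ℝ := ∑ k : Fin n, b k Finset.univ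
noncomputable def BIGP (b : Fin n → Finset (Fin m) → ℝ) : ℝ := bmax b + 2

noncomputable def price (b : Fin n → Finset (Fin m) → ℝ) (S : Finset (Fin m)) (ε : ℝ)
    (ν : Fin m → ℕ) : Fin m → ℝ :=
  fun e => if e ∈ S then ε * ν e else BIGP b

noncomputable def qk (b : Fin n → Finset (Fin m) → ℝ) (S : Finset (Fin m)) (ε : ℝ)
    (ν : Fin m → ℕ) (A : Fin n → Finset (Fin m)) (k : Fin n) : Fin m → ℝ :=
  fun e => price b S ε ν e + (if e ∈ A k then 0 else ε)

/-- auction invariant -/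
def Inv (b : Fin n → Finset (Fin m) → ℝ) (K : Finset (Fin n)) (S : Finset (Fin m))
    (ε : ℝ) (ν : Fin m → ℕ) (A : Fin n → Finset (Fin m)) : Prop :=
  (∀ k, k ∉ K → A k = ∅) ∧
  (∀ k, A k ⊆ S) ∧
  (∀ k l, k ≠ l → Disjoint (A k) (A l)) ∧
  (∀ e ∈ S, (∀ k ∈ K, e ∉ A k) → ν e = 0) ∧
  (∀ k ∈ K, ∃ D, A k ⊆ D ∧ InDemand (b k) (qk b S ε ν A k) D)

variable {b : Fin n → Finset (Fin m) → ℝ}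

lemma bmax_nonneg (hb : ∀ k, IsGS (b k)) : 0 ≤ bmax b :=
  Finset.sum_nonneg (fun k _ => (hb k).1.2.2 _)

lemma bk_le_bmax (hb : ∀ k, IsGS (b k)) (k : Fin n) : b k Finset.univ ≤ bmax b :=
  Finset.single_le_sum (fun l _ => (hb l).1.2.2 _) (mem_univ k)

lemma demand_price_le {v : Finset (Fin m) → ℝ} (hv : IsValuation v) (P : Fin m → ℝ)
    (D : Finset (Fin m)) (hD : InDemand v P D) {e : Fin m} (he : e ∈ D) :
    P e ≤ v Finset.univ := by
  have h := hD (D.erase e)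
  have hsum : ∑ x ∈ D, P x = (∑ x ∈ D.erase e, P x) + P e :=
    (Finset.sum_erase_add D P he).symm
  have h1 : v (D.erase e) ≤ v D := hv.2.1 _ _ (Finset.erase_subset e D)
  have h2 : 0 ≤ v (D.erase e) := hv.2.2 _
  have h3 : v D ≤ v Finset.univ := hv.2.1 _ _ (Finset.subset_univ D)
  rw [hsum] at h
  linarith

lemma demand_subset {v : Finset (Fin m) → ℝ} (hv : IsValuation v)
    (hvb : v Finset.univ + 1 ≤ BIGP b)
    {S : Finset (Fin m)} {P : Fin m → ℝ} (hP : ∀ e ∉ S, BIGP b ≤ P e)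
    {D : Finset (Fin m)} (hD : InDemand v P D) : D ⊆ S := by
  intro e he
  by_contra hes
  have h1 := demand_price_le hv P D hD he
  have h2 := hP e hes
  linarith


lemma auction_step (hb : ∀ k, IsGS (b k)) {K : Finset (Fin n)} {S : Finset (Fin m)}
    {ε : ℝ} (hε : 0 < ε) {ν : Fin m → ℕ} {A : Fin n → Finset (Fin m)}
    (hInv : Inv b K S ε ν A) {k : Fin n} (hk : k ∈ K) {D : Finset (Fin m)}
    (hAD : A k ⊆ D) (hD : InDemand (b k) (qk b S ε ν A k) D) (hne : D ≠ A k) :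
    ∃ ν' A', Inv b K S ε ν' A' ∧ (∑ e ∈ S, ν e) + 1 ≤ ∑ e ∈ S, ν' e := by
  classical
  obtain ⟨hA0, hAS, hdisj, hzero, hdem⟩ := hInv
  have hDS : D ⊆ S := by
    refine demand_subset (b := b) (hb k).1 ?_ ?_ hD
    · have := bk_le_bmax hb k
      unfold BIGP; linarith
    · intro e he
      unfold qk price
      rw [if_neg he]
      have : (0:ℝ) ≤ if e ∈ A k then 0 else ε := by
        by_cases h : e ∈ A k <;> simp [h, le_of_lt hε]
      linarith
  set F := D \ A k with hF
  have hFS : F ⊆ S := (Finset.sdiff_subset).trans hDS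
  set ν' : Fin m → ℕ := fun e => if e ∈ F then ν e + 1 else ν e with hν'
  set A' : Fin n → Finset (Fin m) := fun l => if l = k then D else A l \ D with hA'
  have hpr : ∀ e, price b S ε ν' e = price b S ε ν e + (if e ∈ F then ε else 0) := by
    intro e
    by_cases heS : e ∈ S
    · by_cases heF : e ∈ F
      · simp only [price, hν', heS, if_true, heF]
        push_cast; ring
      · simp only [price, hν', heS, if_true, heF, if_false]
        ring
    · have heF : e ∉ F := fun h => heS (hFS h)
      simp only [price, hν', heS, if_false, heF]
      ring
  have hA'k : A' k = D := by rw [hA']; simp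
  have hq_k : qk b S ε ν' A' k = qk b S ε ν A k := by
    funext e
    unfold qk
    rw [hpr e, hA'k]
    by_cases heD : e ∈ D
    · by_cases heA : e ∈ A k
      · have heF : e ∉ F := by rw [hF]; simp [heA]
        simp [heD, heA, heF]
      · have heF : e ∈ F := by rw [hF]; simp [heD, heA]
        simp [heD, heA, heF]
    · have heF : e ∉ F := by rw [hF]; simp [heD]
      have heA : e ∉ A k := fun h => heD (hAD h)
      simp [heD, heA, heF]
  refine ⟨ν', A', ⟨?_, ?_, ?_, ?_, ?_⟩, ?_⟩
  · -- A' l = ∅ off K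
    intro l hl
    have hlk : l ≠ k := fun h => hl (h ▸ hk)
    rw [hA']
    simp only [hlk, if_false]
    rw [hA0 l hl]
    exact Finset.empty_sdiff D
  · -- subsets of S
    intro l
    rw [hA']
    by_cases hlk : l = k
    · simp only [hlk, if_true]; exact hDS
    · simp only [hlk, if_false]
      exact (Finset.sdiff_subset).trans (hAS l)
  · -- pairwise disjoint
    intro l l' hll
    rw [hA']
    by_cases hlk : l = k
    · have hl'k : ¬ l' = k := by rw [hlk] at hll; exact fun h => hll h.symm
      simp only [hlk, if_true, hl'k, if_false]
      exact Finset.disjoint_sdiff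
    · by_cases hl'k : l' = k
      · simp only [hlk, if_false, hl'k, if_true]
        exact Finset.disjoint_sdiff.symm
      · simp only [hlk, if_false, hl'k]
        exact (hdisj l l' hll).mono Finset.sdiff_subset Finset.sdiff_subset
  · -- zero prices off allocation
    intro e heS hnot
    have heD : e ∉ D := by
      have := hnot k hk
      rw [hA'k] at this
      exact this
    have heF : e ∉ F := by rw [hF]; simp [heD]
    rw [hν']
    simp only [heF, if_false]
    apply hzero e heS
    intro l hl
    have := hnot l hl
    by_cases hlk : l = k
    · rw [hlk]; exact fun h => heD (hAD h)
    · rw [hA'] at this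
      simp only [hlk, if_false] at this
      intro hAl
      by_cases heD' : e ∈ D
      · exact heD heD'
      · exact this (Finset.mem_sdiff.mpr ⟨hAl, heD'⟩)
  · -- demand invariant
    intro l hl
    by_cases hlk : l = k
    · subst hlk
      refine ⟨D, ?_, ?_⟩
      · rw [hA'k]
      · rw [hq_k]; exact hD
    · obtain ⟨Dl, hsub, hdeml⟩ := hdem l hl
      have hAlk : Disjoint (A l) (A k) := hdisj l k hlk
      have hA'l : A' l = A l \ D := by rw [hA']; simp [hlk]
      have key : ∀ e, qk b S ε ν A l e ≤ qk b S ε ν' A' l e ∧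
          (e ∈ A l \ D → qk b S ε ν A l e = qk b S ε ν' A' l e) := by
        intro e
        unfold qk
        rw [hpr e, hA'l]
        by_cases heAl : e ∈ A l
        · by_cases heD : e ∈ D
          · have heAk : e ∉ A k := Finset.disjoint_left.mp hAlk heAl
            have heF : e ∈ F := by rw [hF]; exact Finset.mem_sdiff.mpr ⟨heD, heAk⟩
            have heAlD : e ∉ A l \ D := by simp [heD]
            constructor
            · simp [heAl, heF, heAlD]; linarith
            · intro h; exact absurd h heAlD
          · have heF : e ∉ F := by rw [hF]; simp [heD]
            have heAlD : e ∈ A l \ D := Finset.mem_sdiff.mpr ⟨heAl, heD⟩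
            constructor
            · simp [heAl, heF, heAlD]
            · intro _; simp [heAl, heF, heAlD]
        · have heAlD : e ∉ A l \ D := by simp [heAl]
          constructor
          · have : (0:ℝ) ≤ if e ∈ F then ε else 0 := by
              by_cases h : e ∈ F <;> simp [h, le_of_lt hε]
            simp only [heAl, if_false, heAlD]
            linarith
          · intro h; exact absurd h heAlD
      obtain ⟨T, hTdem, hret⟩ := (hb l).2 _ _ (fun e => (key e).1) Dl hdeml
      refine ⟨T, ?_, hTdem⟩
      rw [hA'l]
      intro e he
      exact hret e (hsub (Finset.mem_sdiff.mp he).1) ((key e).2 he)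
  · -- measure increases
    have hFne : F.Nonempty := by
      rw [hF]
      rw [Finset.sdiff_nonempty]
      intro hsub
      exact hne (le_antisymm hsub hAD)
    have hcard : 1 ≤ F.card := Finset.card_pos.mpr hFne
    have : ∑ e ∈ S, ν' e = (∑ e ∈ S, ν e) + F.card := by
      rw [hν']
      have : ∀ e ∈ S, (if e ∈ F then ν e + 1 else ν e) = ν e + (if e ∈ F then 1 else 0) := by
        intro e _; by_cases h : e ∈ F <;> simp [h]
      rw [Finset.sum_congr rfl this, Finset.sum_add_distrib]
      congr 1
      rw [Finset.sum_ite_mem]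
      have : S ∩ F = F := Finset.inter_eq_right.mpr hFS
      rw [this]
      simp
    omega


lemma indemand_of_attain {v : Finset (Fin m) → ℝ} {p : Fin m → ℝ} {T : Finset (Fin m)}
    (h : vstar v p = usum v p T) : InDemand v p T := by
  intro T'
  have h1 : usum v p T' ≤ vstar v p := usum_le_vstar v p T'
  rw [h] at h1
  exact h1

lemma inv_init (hb : ∀ k, IsGS (b k)) (K : Finset (Fin n)) (S : Finset (Fin m))
    (ε : ℝ) : Inv b K S ε (fun _ => 0) (fun _ => ∅) := by
  refine ⟨fun _ _ => rfl, fun _ => Finset.empty_subset S,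
    fun _ _ _ => Finset.disjoint_empty_left _, fun _ _ _ => rfl, ?_⟩
  intro k _
  obtain ⟨T, hT⟩ := exists_vstar (b k) (qk b S ε (fun _ => 0) (fun _ => ∅) k)
  exact ⟨T, Finset.empty_subset T, indemand_of_attain hT⟩

lemma price_upper (hb : ∀ k, IsGS (b k)) {K : Finset (Fin n)} {S : Finset (Fin m)}
    {ε : ℝ} {ν : Fin m → ℕ} {A : Fin n → Finset (Fin m)}
    (hInv : Inv b K S ε ν A) : ∀ e ∈ S, ε * ν e ≤ bmax b := by
  obtain ⟨hA0, hAS, hdisj, hzero, hdem⟩ := hInv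
  intro e heS
  by_cases howned : ∃ k ∈ K, e ∈ A k
  · obtain ⟨k, hk, hek⟩ := howned
    obtain ⟨D, hAD, hD⟩ := hdem k hk
    have h1 := demand_price_le (hb k).1 _ D hD (hAD hek)
    have h2 : qk b S ε ν A k e = ε * ν e := by
      unfold qk price
      simp [heS, hek]
    rw [h2] at h1
    exact h1.trans (bk_le_bmax hb k)
  · push_neg at howned
    rw [hzero e heS howned]
    simpa using bmax_nonneg hb

lemma exists_final (hb : ∀ k, IsGS (b k)) (K : Finset (Fin n)) (S : Finset (Fin m))
    {ε : ℝ} (hε : 0 < ε) :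
    ∃ ν A, Inv b K S ε ν A ∧ ∀ k ∈ K, InDemand (b k) (qk b S ε ν A k) (A k) := by
  classical
  set T : Set ℕ := {t | ∃ ν A, Inv b K S ε ν A ∧ (∑ e ∈ S, ν e) = t} with hT
  have hne : T.Nonempty := ⟨_, ⟨_, _, inv_init hb K S ε, rfl⟩⟩
  have hbdd : BddAbove T := by
    refine ⟨Nat.ceil ((S.card : ℝ) * bmax b / ε), ?_⟩
    rintro t ⟨ν, A, hInv, ht⟩
    have h1 : ∀ e ∈ S, (ν e : ℝ) ≤ bmax b / ε := by
      intro e he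
      have := price_upper hb hInv e he
      rw [le_div_iff₀ hε]
      linarith [this]
    have h2 : (t : ℝ) ≤ (S.card : ℝ) * (bmax b / ε) := by
      rw [← ht]
      push_cast
      calc (∑ e ∈ S, (ν e : ℝ)) ≤ ∑ _e ∈ S, (bmax b / ε) :=
            Finset.sum_le_sum h1
        _ = (S.card : ℝ) * (bmax b / ε) := by rw [Finset.sum_const]; ring
    have h3 : (t : ℝ) ≤ (S.card : ℝ) * bmax b / ε := by
      rw [mul_div_assoc]; exact h2
    have h4 : (t : ℝ) ≤ (Nat.ceil ((S.card : ℝ) * bmax b / ε) : ℝ) :=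
      h3.trans (Nat.le_ceil _)
    exact_mod_cast h4
  have hmem := Nat.sSup_mem hne hbdd
  obtain ⟨ν, A, hInv, hsum⟩ := hmem
  refine ⟨ν, A, hInv, ?_⟩
  intro k hk
  obtain ⟨D, hAD, hD⟩ := hInv.2.2.2.2 k hk
  by_cases hDe : D = A k
  · rw [← hDe]; exact hD
  · exfalso
    obtain ⟨ν', A', hInv', hinc⟩ := auction_step hb hε hInv hk hAD hD hDe
    have hmem' : (∑ e ∈ S, ν' e) ∈ T := ⟨ν', A', hInv', rfl⟩
    have hle := le_csSup hbdd hmem'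
    omega

lemma auction_gap (hb : ∀ k, IsGS (b k)) (K : Finset (Fin n)) (S : Finset (Fin m))
    {δ : ℝ} (hδ : 0 < δ) :
    ∃ (P : Fin m → ℝ) (A : Fin n → Finset (Fin m)),
      (∀ e, 0 ≤ P e) ∧ (∀ e ∈ S, P e ≤ bmax b) ∧ (∀ e ∉ S, P e = BIGP b) ∧
      (∀ k, k ∉ K → A k = ∅) ∧ (∀ k, A k ⊆ S) ∧
      (∀ k l, k ≠ l → Disjoint (A k) (A l)) ∧
      (∑ k ∈ K, vstar (b k) P) + (∑ e ∈ S, P e) ≤ (∑ k ∈ K, b k (A k)) + δ := by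
  classical
  set ε : ℝ := δ / ((n : ℝ) * m + 1) with hεdef
  have hnm : (0:ℝ) < (n : ℝ) * m + 1 := by positivity
  have hε : 0 < ε := div_pos hδ hnm
  obtain ⟨ν, A, hInv, hfin⟩ := exists_final hb K S hε
  obtain ⟨hA0, hAS, hdisj, hzero, hdem⟩ := hInv
  set P : Fin m → ℝ := price b S ε ν with hP
  have hPnn : ∀ e, 0 ≤ P e := by
    intro e
    rw [hP]; unfold price
    by_cases h : e ∈ S
    · simp [h]; positivity
    · simp [h]; unfold BIGP; linarith [bmax_nonneg hb]
  have hPle : ∀ e ∈ S, P e ≤ bmax b := by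
    intro e he
    rw [hP]; unfold price
    simp only [he, if_true]
    exact price_upper hb ⟨hA0, hAS, hdisj, hzero, hdem⟩ e he
  have hPout : ∀ e ∉ S, P e = BIGP b := by
    intro e he
    rw [hP]; unfold price
    simp [he]
  refine ⟨P, A, hPnn, hPle, hPout, hA0, hAS, hdisj, ?_⟩
  -- per-agent bound
  have hagent : ∀ k ∈ K, vstar (b k) P ≤
      b k (A k) - (∑ e ∈ A k, P e) + ε * S.card := by
    intro k hk
    obtain ⟨T, hT⟩ := exists_vstar (b k) P
    have hTdem : InDemand (b k) P T := indemand_of_attain hT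
    have hTS : T ⊆ S := by
      refine demand_subset (b := b) (hb k).1 ?_ ?_ hTdem
      · have := bk_le_bmax hb k
        unfold BIGP; linarith
      · intro e he; rw [hPout e he]
    have h1 : usum (b k) P T ≤ usum (b k) (qk b S ε ν A k) T + ε * T.card := by
      unfold usum qk
      have : ∑ e ∈ T, (P e + if e ∈ A k then 0 else ε)
          = (∑ e ∈ T, P e) + ∑ e ∈ T, (if e ∈ A k then 0 else ε) := by
        rw [Finset.sum_add_distrib]
      rw [this]
      have h2 : ∑ e ∈ T, (if e ∈ A k then (0:ℝ) else ε) ≤ ε * T.card := by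
        calc ∑ e ∈ T, (if e ∈ A k then (0:ℝ) else ε) ≤ ∑ _e ∈ T, ε := by
              apply Finset.sum_le_sum
              intro e _
              by_cases h : e ∈ A k <;> simp [h, le_of_lt hε]
        _ = ε * T.card := by rw [Finset.sum_const]; ring
      linarith
    have h3 : usum (b k) (qk b S ε ν A k) T ≤ usum (b k) (qk b S ε ν A k) (A k) :=
      hfin k hk T
    have h4 : usum (b k) (qk b S ε ν A k) (A k) = b k (A k) - ∑ e ∈ A k, P e := by
      unfold usum qk
      have : ∀ e ∈ A k, (P e + if e ∈ A k then (0:ℝ) else ε) = P e := by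
        intro e he; simp [he]
      rw [Finset.sum_congr rfl this]
    have h5 : (T.card : ℝ) ≤ S.card := by
      exact_mod_cast Finset.card_le_card hTS
    rw [hT]
    have h6 : ε * T.card ≤ ε * S.card := by
      apply mul_le_mul_of_nonneg_left h5 (le_of_lt hε)
    linarith
  -- sum of prices equals allocated prices
  have hpsum : ∑ e ∈ S, P e = ∑ k ∈ K, ∑ e ∈ A k, P e := by
    have hsub : K.biUnion A ⊆ S := by
      intro e he
      rw [Finset.mem_biUnion] at he
      obtain ⟨k, _, hek⟩ := he
      exact hAS k hek
    have h0 : ∀ e ∈ S, e ∉ K.biUnion A → P e = 0 := by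
      intro e he hnot
      rw [Finset.mem_biUnion] at hnot
      push_neg at hnot
      have := hzero e he hnot
      rw [hP]; unfold price
      simp [he, this]
    have h1 : ∑ e ∈ K.biUnion A, P e = ∑ e ∈ S, P e :=
      Finset.sum_subset hsub (fun e he hne => h0 e he hne)
    rw [← h1]
    rw [Finset.sum_biUnion]
    intro k hkK l hlK hkl
    exact hdisj k l hkl
  have hKS : ε * (K.card : ℝ) * (S.card : ℝ) ≤ δ := by
    have hK : (K.card : ℝ) ≤ n := by
      have := Finset.card_le_card (Finset.subset_univ K)
      rw [Finset.card_univ, Fintype.card_fin] at this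
      exact_mod_cast this
    have hS : (S.card : ℝ) ≤ m := by
      have := Finset.card_le_card (Finset.subset_univ S)
      rw [Finset.card_univ, Fintype.card_fin] at this
      exact_mod_cast this
    have h1 : ε * (K.card : ℝ) * (S.card : ℝ) ≤ ε * ((n:ℝ) * m) := by
      have hKnn : (0:ℝ) ≤ K.card := Nat.cast_nonneg _
      have hSnn : (0:ℝ) ≤ S.card := Nat.cast_nonneg _
      have := mul_le_mul hK hS hSnn (by positivity : (0:ℝ) ≤ (n:ℝ))
      calc ε * (K.card : ℝ) * (S.card : ℝ) = ε * ((K.card : ℝ) * S.card) := by ring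
      _ ≤ ε * ((n:ℝ) * m) := by
          apply mul_le_mul_of_nonneg_left _ (le_of_lt hε)
          exact this
    have h2 : ε * ((n:ℝ)*m) ≤ δ := by
      rw [hεdef]
      rw [div_mul_eq_mul_div, div_le_iff₀ hnm]
      nlinarith
    linarith
  calc (∑ k ∈ K, vstar (b k) P) + (∑ e ∈ S, P e)
      ≤ (∑ k ∈ K, (b k (A k) - (∑ e ∈ A k, P e) + ε * S.card)) + (∑ e ∈ S, P e) := by
        refine add_le_add ?_ le_rfl
        exact Finset.sum_le_sum hagent
    _ = (∑ k ∈ K, b k (A k)) - (∑ k ∈ K, ∑ e ∈ A k, P e)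
        + (K.card : ℝ) * (ε * S.card) + (∑ e ∈ S, P e) := by
        rw [Finset.sum_add_distrib, Finset.sum_sub_distrib, Finset.sum_const]
        push_cast
        ring
    _ ≤ (∑ k ∈ K, b k (A k)) + δ := by
        rw [hpsum]
        have : (K.card : ℝ) * (ε * S.card) = ε * K.card * S.card := by ring
        rw [this]
        linarith [hKS]


lemma weak_duality (K : Finset (Fin n)) (S : Finset (Fin m))
    (r : Fin m → ℝ) (hr : ∀ e, 0 ≤ r e) (X : Fin n → Finset (Fin m))
    (hdisj : ∀ k l, k ≠ l → Disjoint (X k) (X l)) (hXS : ∀ k, X k ⊆ S) :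
    ∑ k ∈ K, b k (X k) ≤ (∑ k ∈ K, vstar (b k) r) + ∑ e ∈ S, r e := by
  classical
  have h1 : ∀ k ∈ K, b k (X k) ≤ vstar (b k) r + ∑ e ∈ X k, r e := by
    intro k _
    have := usum_le_vstar (b k) r (X k)
    unfold usum at this
    linarith
  calc ∑ k ∈ K, b k (X k) ≤ ∑ k ∈ K, (vstar (b k) r + ∑ e ∈ X k, r e) :=
        Finset.sum_le_sum h1
    _ = (∑ k ∈ K, vstar (b k) r) + ∑ k ∈ K, ∑ e ∈ X k, r e := by
        rw [Finset.sum_add_distrib]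
    _ ≤ (∑ k ∈ K, vstar (b k) r) + ∑ e ∈ S, r e := by
        have h2 : ∑ k ∈ K, ∑ e ∈ X k, r e = ∑ e ∈ K.biUnion X, r e := by
          rw [Finset.sum_biUnion]
          intro k _ l _ hkl
          exact hdisj k l hkl
        have h3 : K.biUnion X ⊆ S := by
          intro e he
          rw [Finset.mem_biUnion] at he
          obtain ⟨k, _, hek⟩ := he
          exact hXS k hek
        have h4 : ∑ e ∈ K.biUnion X, r e ≤ ∑ e ∈ S, r e :=
          Finset.sum_le_sum_of_subset_of_nonneg h3 (fun e _ _ => hr e)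
        linarith

end Auction
end GSaux

namespace GSaux
section Main
variable {n : ℕ} {b : Fin n → Finset (Fin m) → ℝ}

lemma wset_nonempty (hb : ∀ k, IsGS (b k)) (I : Finset (Fin n)) (S : Finset (Fin m)) :
    {t : ℝ | ∃ X : Fin n → Finset (Fin m),
      (∀ k l : Fin n, k ≠ l → Disjoint (X k) (X l)) ∧ (∀ k, X k ⊆ S) ∧
      t = ∑ k ∈ I, b k (X k)}.Nonempty := by
  refine ⟨∑ k ∈ I, b k ∅, fun _ => ∅, ?_, ?_, rfl⟩
  · intro k l _; exact Finset.disjoint_empty_left _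
  · intro k; exact Finset.empty_subset S

lemma wset_bdd (hb : ∀ k, IsGS (b k)) (I : Finset (Fin n)) (S : Finset (Fin m)) :
    BddAbove {t : ℝ | ∃ X : Fin n → Finset (Fin m),
      (∀ k l : Fin n, k ≠ l → Disjoint (X k) (X l)) ∧ (∀ k, X k ⊆ S) ∧
      t = ∑ k ∈ I, b k (X k)} := by
  refine ⟨bmax b, ?_⟩
  rintro t ⟨X, hdisj, hsub, rfl⟩
  calc ∑ k ∈ I, b k (X k) ≤ ∑ k ∈ I, b k Finset.univ := by
        apply Finset.sum_le_sum
        intro k _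
        exact (hb k).1.2.1 _ _ (Finset.subset_univ _)
    _ ≤ ∑ k : Fin n, b k Finset.univ := by
        apply Finset.sum_le_sum_of_subset_of_nonneg (Finset.subset_univ I)
        intro k _ _
        exact (hb k).1.2.2 _
    _ = bmax b := rfl

lemma main_ineq (hb : ∀ k, IsGS (b k)) (i : Fin n) (x : Finset (Fin m)) :
    Wminus b i Finset.univ - Wminus b i (Finset.univ \ x) ≤
      W b Finset.univ - W b (Finset.univ \ x) := by
  classical
  set K : Finset (Fin n) := Finset.univ.erase i with hK
  set S' : Finset (Fin m) := Finset.univ \ x with hS'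
  have key : ∀ δ : ℝ, 0 < δ →
      Wminus b i Finset.univ + W b S' ≤
        W b Finset.univ + Wminus b i S' + (δ + δ) := by
    intro δ hδ
    obtain ⟨P₁, A₁, hP₁nn, hP₁le, _, hA₁0, hA₁S, hA₁disj, hgap₁⟩ :=
      auction_gap (b := b) hb Finset.univ Finset.univ hδ
    obtain ⟨P₂, A₂, hP₂nn, hP₂le, hP₂out, hA₂0, hA₂S, hA₂disj, hgap₂⟩ :=
      auction_gap (b := b) hb K S' hδ
    set r : Fin m → ℝ := fun e => min (P₁ e) (P₂ e) with hr
    set s : Fin m → ℝ := fun e => max (P₁ e) (P₂ e) with hs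
    have hrnn : ∀ e, 0 ≤ r e := fun e => le_min (hP₁nn e) (hP₂nn e)
    have hsnn : ∀ e, 0 ≤ s e := fun e => (hP₁nn e).trans (le_max_left _ _)
    -- (1)
    have h1 : Wminus b i Finset.univ ≤
        (∑ k ∈ K, vstar (b k) r) + ∑ e ∈ Finset.univ, r e := by
      apply Real.sSup_le
      · rintro t ⟨X, hdisj, hsub, rfl⟩
        exact weak_duality K Finset.univ r hrnn X hdisj hsub
      · have ha : (0:ℝ) ≤ ∑ k ∈ K, vstar (b k) r := by
          apply Finset.sum_nonneg
          intro k _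
          have := usum_le_vstar (b k) r ∅
          simp [usum, (hb k).1.1] at this
          linarith
        have hbb : (0:ℝ) ≤ ∑ e ∈ Finset.univ, r e :=
          Finset.sum_nonneg (fun e _ => hrnn e)
        linarith
    -- (2)
    have h2 : W b S' ≤
        (∑ k ∈ Finset.univ, vstar (b k) s) + ∑ e ∈ S', s e := by
      apply Real.sSup_le
      · rintro t ⟨X, hdisj, hsub, rfl⟩
        exact weak_duality Finset.univ S' s hsnn X hdisj hsub
      · have ha : (0:ℝ) ≤ ∑ k : Fin n, vstar (b k) s := by
          apply Finset.sum_nonneg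
          intro k _
          have := usum_le_vstar (b k) s ∅
          simp [usum, (hb k).1.1] at this
          linarith
        have hbb : (0:ℝ) ≤ ∑ e ∈ S', s e :=
          Finset.sum_nonneg (fun e _ => hsnn e)
        linarith
    -- (3)
    have h3 : (∑ k ∈ K, vstar (b k) r) + (∑ k ∈ K, vstar (b k) s) ≤
        (∑ k ∈ K, vstar (b k) P₁) + (∑ k ∈ K, vstar (b k) P₂) := by
      rw [← Finset.sum_add_distrib, ← Finset.sum_add_distrib]
      apply Finset.sum_le_sum
      intro k _
      exact vstar_submod (hb k) P₁ P₂
    -- (4)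
    have h4 : vstar (b i) s ≤ vstar (b i) P₁ :=
      vstar_antitone (b i) (fun e => le_max_left _ _)
    -- (5) price identity
    have h5 : (∑ e ∈ Finset.univ, r e) + (∑ e ∈ S', s e) =
        (∑ e ∈ Finset.univ, P₁ e) + (∑ e ∈ S', P₂ e) := by
      have hxsub : x ⊆ Finset.univ := Finset.subset_univ x
      have hsplit : ∀ f : Fin m → ℝ,
          ∑ e ∈ Finset.univ, f e = (∑ e ∈ S', f e) + ∑ e ∈ x, f e := by
        intro f
        rw [hS']
        exact (Finset.sum_sdiff hxsub).symm
      have hx : ∀ e ∈ x, r e = P₁ e := by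
        intro e he
        have henotS : e ∉ S' := by
          rw [hS']
          simp [he]
        have h1 := hP₂out e henotS
        have h2 := hP₁le e (Finset.mem_univ e)
        rw [hr]
        have : P₁ e ≤ P₂ e := by
          rw [h1]; unfold BIGP; linarith
        simp [min_eq_left this]
      have hS'sum : ∀ e ∈ S', r e + s e = P₁ e + P₂ e := by
        intro e _
        rw [hr, hs]
        exact min_add_max _ _
      rw [hsplit r, hsplit P₁]
      have e1 : ∑ e ∈ x, r e = ∑ e ∈ x, P₁ e := Finset.sum_congr rfl hx
      have e2 : (∑ e ∈ S', r e) + (∑ e ∈ S', s e)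
          = (∑ e ∈ S', P₁ e) + (∑ e ∈ S', P₂ e) := by
        rw [← Finset.sum_add_distrib, ← Finset.sum_add_distrib]
        exact Finset.sum_congr rfl hS'sum
      linarith
    -- (6a)
    have h6a : (∑ k ∈ Finset.univ, vstar (b k) P₁) + (∑ e ∈ Finset.univ, P₁ e) ≤
        W b Finset.univ + δ := by
      have hmem : (∑ k ∈ Finset.univ, b k (A₁ k)) ∈ {t : ℝ | ∃ X : Fin n → Finset (Fin m),
          (∀ k l : Fin n, k ≠ l → Disjoint (X k) (X l)) ∧ (∀ k, X k ⊆ Finset.univ) ∧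
          t = ∑ k, b k (X k)} := ⟨A₁, hA₁disj, fun k => Finset.subset_univ _, rfl⟩
      have hle := le_csSup (wset_bdd hb Finset.univ Finset.univ) hmem
      unfold W
      linarith [hgap₁]
    -- (6b)
    have h6b : (∑ k ∈ K, vstar (b k) P₂) + (∑ e ∈ S', P₂ e) ≤
        Wminus b i S' + δ := by
      have hmem : (∑ k ∈ K, b k (A₂ k)) ∈ {t : ℝ | ∃ X : Fin n → Finset (Fin m),
          (∀ k l : Fin n, k ≠ l → Disjoint (X k) (X l)) ∧ (∀ k, X k ⊆ S') ∧
          t = ∑ k ∈ Finset.univ.erase i, b k (X k)} := ⟨A₂, hA₂disj, hA₂S, by rw [hK]⟩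
      have hle := le_csSup (wset_bdd hb (Finset.univ.erase i) S') hmem
      unfold Wminus
      linarith [hgap₂]
    -- split sums over univ into K and i
    have hsplitQ : ∀ g : Fin n → ℝ, ∑ k ∈ Finset.univ, g k = (∑ k ∈ K, g k) + g i := by
      intro g
      rw [hK]
      exact (Finset.sum_erase_add Finset.univ g (Finset.mem_univ i)).symm
    rw [hsplitQ (fun k => vstar (b k) s)] at h2
    rw [hsplitQ (fun k => vstar (b k) P₁)] at h6a
    linarith
  have hfin : Wminus b i Finset.univ + W b S' ≤
      W b Finset.univ + Wminus b i S' := by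
    have := le_of_forall_pos_le_add (a := Wminus b i Finset.univ + W b S')
      (b := W b Finset.univ + Wminus b i S') ?_
    · exact this
    · intro ε hε
      have := key (ε/2) (by linarith)
      linarith
  linarith

end Main
end GSaux

/-- for GS bids, the marginal welfare of a set `x` with respect to the other
agents is at most its marginal welfare with respect to all agents. -/
theorem stmt12 {n m : ℕ} (b : Fin n → Finset (Fin m) → ℝ) (hb : ∀ i, IsGS (b i))
    (i : Fin n) (x : Finset (Fin m)) :
    Wminus b i Finset.univ - Wminus b i (Finset.univ \ x) ≤
      W b Finset.univ - W b (Finset.univ \ x) :=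
  GSaux.main_ineq hb i x
end
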